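/- For every complex number y with Re y > 0 and every real x > 0, one has e^{-y√x} = (√y/(2√π)) ∫₀^∞ e^{-y(rx + 1/(4r))} r^{-3/2} dr, where √y is the principal branch of the complex square root and the integral is absolutely convergent. -/

import Mathlib

open MeasureTheory Real Set Complex

noncomputable def subordPhi (x r : ℝ) : ℝ := r * x + 1 / (4 * r)

noncomputable def subordU (x r : ℝ) : ℝ :=
  Real.sqrt x * r ^ ((1:ℝ)/2) - (1/2) * r ^ (-(1:ℝ)/2)

noncomputable def subordU' (x r : ℝ) : ℝ :=
  (Real.sqrt x / 2) * r ^ (-(1:ℝ)/2) + (1/4) * r ^ (-(3:ℝ)/2)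

lemma subord_contOn (y : ℂ) (x p : ℝ) :
    ContinuousOn (fun r : ℝ => Complex.exp (-y * ((subordPhi x r : ℝ) : ℂ)) * ((r ^ p : ℝ) : ℂ))
      (Ioi 0) := by
  apply ContinuousOn.mul
  · apply Complex.continuous_exp.comp_continuousOn
    apply ContinuousOn.mul continuousOn_const
    apply Complex.continuous_ofReal.comp_continuousOn
    apply ContinuousOn.add (continuousOn_id.mul continuousOn_const)
    exact continuousOn_const.div (continuousOn_const.mul continuousOn_id)
      (fun r hr => by simp [ne_of_gt (mem_Ioi.mp hr)])
  · apply Complex.continuous_ofReal.comp_continuousOn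
    exact ContinuousOn.rpow_const continuousOn_id
      (fun r hr => Or.inl (ne_of_gt (mem_Ioi.mp hr)))

lemma subord_norm_aux (y : ℂ) (t r p : ℝ) (hr : 0 ≤ r) :
    ‖Complex.exp (-y * (t : ℂ)) * ((r ^ p : ℝ) : ℂ)‖ = Real.exp (-y.re * t) * r ^ p := by
  rw [norm_mul, Complex.norm_exp, Complex.norm_real, Real.norm_eq_abs,
    _root_.abs_of_nonneg (Real.rpow_nonneg hr p)]
  congr 1
  simp [Complex.mul_re]

lemma subord_integrable_aux (y : ℂ) (hy : 0 < y.re) {x : ℝ} (hx : 0 < x) {p : ℝ}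
    (hp : -2 ≤ p) (hp0 : p ≤ 0) :
    IntegrableOn
      (fun r : ℝ => Complex.exp (-y * ((subordPhi x r : ℝ) : ℂ)) * ((r ^ p : ℝ) : ℂ))
      (Ioi 0) := by
  set c := y.re with hc
  have hmeas : AEStronglyMeasurable
      (fun r : ℝ => Complex.exp (-y * ((subordPhi x r : ℝ) : ℂ)) * ((r ^ p : ℝ) : ℂ))
      (volume.restrict (Ioi 0)) :=
    (subord_contOn y x p).aestronglyMeasurable measurableSet_Ioi
  rw [← Ioc_union_Ioi_eq_Ioi (zero_le_one : (0:ℝ) ≤ 1)]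
  apply IntegrableOn.union
  · -- on Ioc 0 1 : bounded by 64 / c^2
    apply Integrable.mono' (g := fun _ : ℝ => 64 / c ^ 2)
    · exact integrableOn_const measure_Ioc_lt_top.ne
    · exact hmeas.mono_set Ioc_subset_Ioi_self
    · filter_upwards [ae_restrict_mem measurableSet_Ioc] with r hr
      obtain ⟨hr0, hr1⟩ := hr
      rw [subord_norm_aux y _ r p hr0.le]
      set t := c / (4 * r) with ht
      have ht0 : 0 < t := by positivity
      have hE : t / 2 + 1 ≤ Real.exp (t / 2) := Real.add_one_le_exp _
      have hEt : Real.exp t = Real.exp (t / 2) * Real.exp (t / 2) := by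
        rw [← Real.exp_add]; ring_nf
      have he : t ^ 2 / 4 ≤ Real.exp t := by nlinarith [Real.exp_pos (t / 2)]
      have h2 : Real.exp (-c * subordPhi x r) ≤ Real.exp (-t) := by
        apply Real.exp_le_exp.mpr
        have hphi : 1 / (4 * r) ≤ subordPhi x r := by
          have : 0 ≤ r * x := mul_nonneg hr0.le hx.le
          simp only [subordPhi]; linarith
        have : t ≤ c * subordPhi x r := by
          rw [ht, div_eq_mul_inv, ← one_div]
          exact mul_le_mul_of_nonneg_left hphi hy.le
        linarith
      have h3 : Real.exp (-t) ≤ 64 * r ^ 2 / c ^ 2 := by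
        have h4 : Real.exp (-t) * t ^ 2 ≤ 4 := by
          rw [Real.exp_neg]
          have := Real.exp_pos t
          rw [inv_mul_le_iff₀ this]
          nlinarith
        have ht2 : t ^ 2 = c ^ 2 / (64 * r ^ 2) * 4 := by
          rw [ht]; field_simp; ring
        rw [ht2] at h4
        have hcr : 0 < c ^ 2 / (64 * r ^ 2) := by positivity
        calc Real.exp (-t) = Real.exp (-t) * (c ^ 2 / (64 * r ^ 2) * 4) /
              (c ^ 2 / (64 * r ^ 2) * 4) := by field_simp
          _ ≤ 4 / (c ^ 2 / (64 * r ^ 2) * 4) := by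
              apply div_le_div_of_nonneg_right h4 (by positivity) |>.trans_eq rfl
          _ = 64 * r ^ 2 / c ^ 2 := by field_simp
      have h5 : r ^ p ≤ (r ^ 2)⁻¹ := by
        have := Real.rpow_le_rpow_of_exponent_ge hr0 hr1 hp
        rwa [Real.rpow_neg hr0.le, show ((2:ℝ) : ℝ) = ((2:ℕ) : ℝ) by norm_num,
          Real.rpow_natCast] at this
      calc Real.exp (-c * subordPhi x r) * r ^ p
          ≤ (64 * r ^ 2 / c ^ 2) * r ^ p :=
            mul_le_mul_of_nonneg_right (h2.trans h3) (Real.rpow_nonneg hr0.le p)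
        _ ≤ (64 * r ^ 2 / c ^ 2) * (r ^ 2)⁻¹ :=
            mul_le_mul_of_nonneg_left h5 (by positivity)
        _ = 64 / c ^ 2 := by field_simp
  · -- on Ioi 1 : bounded by exp (-(c*x) * r)
    apply Integrable.mono' (exp_neg_integrableOn_Ioi 1 (mul_pos hy hx))
    · exact hmeas.mono_set (Ioi_subset_Ioi zero_le_one)
    · filter_upwards [ae_restrict_mem measurableSet_Ioi] with r hr
      have hr1 : (1:ℝ) < r := hr
      have hr0 : 0 < r := lt_trans zero_lt_one hr1
      rw [subord_norm_aux y _ r p hr0.le]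
      have h1 : r ^ p ≤ 1 := Real.rpow_le_one_of_one_le_of_nonpos hr1.le hp0
      have h2 : Real.exp (-c * subordPhi x r) ≤ Real.exp (-(c * x) * r) := by
        apply Real.exp_le_exp.mpr
        have hphi : r * x ≤ subordPhi x r := by
          have : 0 < 1 / (4 * r) := by positivity
          simp only [subordPhi]; linarith
        have : c * (r * x) ≤ c * subordPhi x r := mul_le_mul_of_nonneg_left hphi hy.le
        nlinarith
      calc Real.exp (-c * subordPhi x r) * r ^ p
          ≤ Real.exp (-c * subordPhi x r) * 1 :=
            mul_le_mul_of_nonneg_left h1 (Real.exp_nonneg _)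
        _ ≤ Real.exp (-(c * x) * r) := by rw [mul_one]; exact h2

lemma subord_step1 (y : ℂ) {x : ℝ} (hx : 0 < x) :
    (∫ r in Ioi (0:ℝ), Complex.exp (-y * ((subordPhi x r : ℝ) : ℂ)) * ((r ^ (-(3:ℝ)/2) : ℝ) : ℂ))
    = ((2 * Real.sqrt x : ℝ) : ℂ) *
      ∫ r in Ioi (0:ℝ),
        Complex.exp (-y * ((subordPhi x r : ℝ) : ℂ)) * ((r ^ (-(1:ℝ)/2) : ℝ) : ℂ) := by
  set g : ℝ → ℂ :=
    fun r => Complex.exp (-y * ((subordPhi x r : ℝ) : ℂ)) * ((r ^ (-(3:ℝ)/2) : ℝ) : ℂ) with hg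
  have himg : (fun r : ℝ => 1 / (4 * x * r)) '' Ioi 0 = Ioi 0 := by
    ext t
    simp only [mem_image, mem_Ioi]
    constructor
    · rintro ⟨r, hr, rfl⟩; positivity
    · intro ht
      refine ⟨1 / (4 * x * t), by positivity, ?_⟩
      field_simp
  have hderiv : ∀ r ∈ Ioi (0:ℝ), HasDerivWithinAt (fun r : ℝ => 1 / (4 * x * r))
      (-(1 / (4 * x * r ^ 2))) (Ioi 0) r := by
    intro r hr
    have hr0 : r ≠ 0 := ne_of_gt hr
    have h := (hasDerivAt_inv hr0).const_mul ((4 * x)⁻¹)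
    have heq : (fun r : ℝ => (4 * x)⁻¹ * r⁻¹) = fun r : ℝ => 1 / (4 * x * r) := by
      funext r; field_simp
    rw [heq] at h
    have : (4 * x)⁻¹ * -(r ^ 2)⁻¹ = -(1 / (4 * x * r ^ 2)) := by field_simp
    rw [this] at h
    exact h.hasDerivWithinAt
  have hinj : InjOn (fun r : ℝ => 1 / (4 * x * r)) (Ioi 0) := by
    intro a ha b hb h
    simp only at h
    have ha0 : a ≠ 0 := ne_of_gt ha
    have hb0 : b ≠ 0 := ne_of_gt hb
    field_simp at h
    exact h.symm
  have key := integral_image_eq_integral_abs_deriv_smul measurableSet_Ioi hderiv hinj g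
  rw [himg] at key
  rw [key, ← MeasureTheory.integral_const_mul]
  apply setIntegral_congr_fun measurableSet_Ioi
  intro r hr
  have hr0 : (0:ℝ) < r := hr
  have h4x : (0:ℝ) < 4 * x := by positivity
  have h4xr : (0:ℝ) < 4 * x * r := by positivity
  have habs : |(-(1 / (4 * x * r ^ 2)))| = 1 / (4 * x * r ^ 2) := by
    rw [abs_neg, abs_of_pos (by positivity)]
  have hphi : subordPhi x (1 / (4 * x * r)) = subordPhi x r := by
    simp only [subordPhi]; field_simp; ring
  have e1 : (1 / (4 * x * r)) ^ (-(3:ℝ)/2) = (4 * x * r) ^ ((3:ℝ)/2) := by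
    rw [one_div, Real.inv_rpow h4xr.le, show -(3:ℝ)/2 = -((3:ℝ)/2) by norm_num,
      Real.rpow_neg h4xr.le, inv_inv]
  have hs4 : Real.sqrt (4 * x) = 2 * Real.sqrt x := by
    rw [show (4:ℝ) * x = 2 ^ 2 * x by norm_num, Real.sqrt_mul (by positivity) x,
      Real.sqrt_sq (by norm_num : (0:ℝ) ≤ 2)]
  have er : r ^ ((3:ℝ)/2) = r ^ (-(1:ℝ)/2) * r ^ 2 := by
    rw [← Real.rpow_natCast r 2, ← Real.rpow_add hr0]; norm_num
  have e4 : (4 * x) ^ ((3:ℝ)/2) = (4 * x) * (2 * Real.sqrt x) := by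
    rw [show (3:ℝ)/2 = 1 + 1/2 by norm_num, Real.rpow_add h4x, Real.rpow_one,
      ← Real.sqrt_eq_rpow, hs4]
  have e2 : (4 * x * r) ^ ((3:ℝ)/2)
      = (4 * x) * (2 * Real.sqrt x) * (r ^ (-(1:ℝ)/2) * r ^ 2) := by
    rw [Real.mul_rpow h4x.le hr0.le, e4, er]
  have hreal : (1 / (4 * x * r ^ 2)) * ((1 / (4 * x * r)) ^ (-(3:ℝ)/2))
      = (2 * Real.sqrt x) * (r ^ (-(1:ℝ)/2)) := by
    rw [e1, e2]; field_simp
  show |(-(1 / (4 * x * r ^ 2)))| • g (1 / (4 * x * r)) = _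
  rw [habs, hg]
  simp only
  rw [hphi, real_smul]
  calc ((1 / (4 * x * r ^ 2) : ℝ) : ℂ) *
        (Complex.exp (-y * ((subordPhi x r : ℝ) : ℂ)) *
          (((1 / (4 * x * r)) ^ (-(3:ℝ)/2) : ℝ) : ℂ))
      = Complex.exp (-y * ((subordPhi x r : ℝ) : ℂ)) *
        (((1 / (4 * x * r ^ 2) * ((1 / (4 * x * r)) ^ (-(3:ℝ)/2)) : ℝ)) : ℂ) := by
        push_cast; ring
    _ = _ := by rw [hreal]; push_cast; ring

lemma subord_hasDerivAt_U {x : ℝ} (r : ℝ) (hr : 0 < r) :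
    HasDerivAt (subordU x) (subordU' x r) r := by
  have d1 : HasDerivAt (fun r : ℝ => r ^ ((1:ℝ)/2)) ((1:ℝ)/2 * r ^ ((1:ℝ)/2 - 1)) r :=
    Real.hasDerivAt_rpow_const (Or.inl (ne_of_gt hr))
  have d2 : HasDerivAt (fun r : ℝ => r ^ (-(1:ℝ)/2)) ((-(1:ℝ)/2) * r ^ (-(1:ℝ)/2 - 1)) r :=
    Real.hasDerivAt_rpow_const (Or.inl (ne_of_gt hr))
  have h := (d1.const_mul (Real.sqrt x)).sub (d2.const_mul ((1:ℝ)/2))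
  refine h.congr_deriv ?_
  rw [show (1:ℝ)/2 - 1 = -(1:ℝ)/2 by norm_num, show -(1:ℝ)/2 - 1 = -(3:ℝ)/2 by norm_num]
  simp only [subordU']
  ring

lemma subord_U'_pos {x : ℝ} (hx : 0 < x) {r : ℝ} (hr : 0 < r) : 0 < subordU' x r := by
  have hs : 0 < Real.sqrt x := Real.sqrt_pos.mpr hx
  have h1 : 0 < r ^ (-(1:ℝ)/2) := Real.rpow_pos_of_pos hr _
  have h2 : 0 < r ^ (-(3:ℝ)/2) := Real.rpow_pos_of_pos hr _
  simp only [subordU']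
  positivity

lemma subord_U_injOn {x : ℝ} (hx : 0 < x) : InjOn (subordU x) (Ioi 0) := by
  apply StrictMonoOn.injOn
  apply strictMonoOn_of_deriv_pos (convex_Ioi 0)
  · intro r hr
    exact (subord_hasDerivAt_U r hr).continuousAt.continuousWithinAt
  · intro r hr
    rw [interior_Ioi] at hr
    rw [(subord_hasDerivAt_U r hr).deriv]
    exact subord_U'_pos hx hr

lemma subord_U_surj {x : ℝ} (hx : 0 < x) : subordU x '' Ioi 0 = univ := by
  refine eq_univ_of_forall fun z => ?_
  set s := Real.sqrt x with hsdef
  have hs : 0 < s := Real.sqrt_pos.mpr hx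
  set w := Real.sqrt (z ^ 2 + 2 * s) with hwdef
  have hw2 : w ^ 2 = z ^ 2 + 2 * s := Real.sq_sqrt (by positivity)
  have hw0 : 0 ≤ w := Real.sqrt_nonneg _
  have hzw : 0 < z + w := by nlinarith
  set t := (z + w) / (2 * s) with htdef
  have ht : 0 < t := by positivity
  refine ⟨t ^ 2, mem_Ioi.mpr (by positivity), ?_⟩
  have h12 : (t ^ 2 : ℝ) ^ ((1:ℝ)/2) = t := by
    rw [← Real.sqrt_eq_rpow, Real.sqrt_sq ht.le]
  have hm12 : (t ^ 2 : ℝ) ^ (-(1:ℝ)/2) = t⁻¹ := by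
    rw [show -(1:ℝ)/2 = -((1:ℝ)/2) by norm_num, Real.rpow_neg (by positivity), h12]
  have h2st : 2 * s * t = z + w := by
    rw [htdef]; field_simp
  have h0 : 2 * s * (2 * s * t ^ 2 - 2 * z * t - 1) = 0 := by
    linear_combination (2 * s * t - z + w) * h2st + hw2
  have hkey : 2 * s * t ^ 2 - 2 * z * t - 1 = 0 :=
    (mul_eq_zero.mp h0).resolve_left (by positivity)
  show s * (t ^ 2 : ℝ) ^ ((1:ℝ)/2) - (1/2) * (t ^ 2 : ℝ) ^ (-(1:ℝ)/2) = z
  rw [h12, hm12]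
  field_simp
  nlinarith [hkey]

lemma subord_U_sq {x : ℝ} (hx : 0 < x) {r : ℝ} (hr : 0 < r) :
    subordU x r ^ 2 + Real.sqrt x = subordPhi x r := by
  have h1 : r ^ ((1:ℝ)/2) * r ^ ((1:ℝ)/2) = r := by rw [← Real.rpow_add hr]; norm_num
  have h2 : r ^ (-(1:ℝ)/2) * r ^ (-(1:ℝ)/2) = r⁻¹ := by
    rw [← Real.rpow_add hr]; norm_num [Real.rpow_neg_one]
  have h3 : r ^ ((1:ℝ)/2) * r ^ (-(1:ℝ)/2) = 1 := by rw [← Real.rpow_add hr]; norm_num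
  have hs2 : Real.sqrt x ^ 2 = x := Real.sq_sqrt hx.le
  show (Real.sqrt x * r ^ ((1:ℝ)/2) - (1/2) * r ^ (-(1:ℝ)/2)) ^ 2 + Real.sqrt x
      = r * x + 1 / (4 * r)
  linear_combination (r ^ ((1:ℝ)/2) * r ^ ((1:ℝ)/2)) * hs2 + x * h1
    - Real.sqrt x * h3 + (1/4) * h2

lemma subord_step2 (y : ℂ) (hy : 0 < y.re) {x : ℝ} (hx : 0 < x) :
    Complex.exp (-y * ((Real.sqrt x : ℝ) : ℂ)) * (((π : ℝ) : ℂ) / y) ^ (1/2 : ℂ)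
      = ((Real.sqrt x / 2 : ℝ) : ℂ) *
          (∫ r in Ioi (0:ℝ),
            Complex.exp (-y * ((subordPhi x r : ℝ) : ℂ)) * ((r ^ (-(1:ℝ)/2) : ℝ) : ℂ))
      + (((1:ℝ)/4 : ℝ) : ℂ) *
          (∫ r in Ioi (0:ℝ),
            Complex.exp (-y * ((subordPhi x r : ℝ) : ℂ)) * ((r ^ (-(3:ℝ)/2) : ℝ) : ℂ)) := by
  set g : ℝ → ℂ :=
    fun t => Complex.exp (-y * (((t : ℂ)) ^ 2 + ((Real.sqrt x : ℝ) : ℂ))) with hgdef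
  have key := integral_image_eq_integral_abs_deriv_smul measurableSet_Ioi
    (fun r hr => (subord_hasDerivAt_U r hr).hasDerivWithinAt) (subord_U_injOn hx) g
  rw [subord_U_surj hx, setIntegral_univ] at key
  have hL : (∫ t : ℝ, g t)
      = Complex.exp (-y * ((Real.sqrt x : ℝ) : ℂ)) * (((π : ℝ) : ℂ) / y) ^ (1/2 : ℂ) := by
    have hsp : ∀ t : ℝ, g t
        = Complex.exp (-y * ((Real.sqrt x : ℝ) : ℂ)) * Complex.exp (-y * (t : ℂ) ^ 2) := by
      intro t
      rw [hgdef]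
      simp only
      rw [← Complex.exp_add]
      ring_nf
    simp_rw [hsp]
    rw [MeasureTheory.integral_const_mul, integral_gaussian_complex hy]
  rw [hL] at key
  rw [key]
  have hcong : EqOn (fun r : ℝ => |subordU' x r| • g (subordU x r))
      (fun r : ℝ =>
        (Real.sqrt x / 2 : ℝ) •
          (Complex.exp (-y * ((subordPhi x r : ℝ) : ℂ)) * ((r ^ (-(1:ℝ)/2) : ℝ) : ℂ))
        + ((1:ℝ)/4 : ℝ) •
          (Complex.exp (-y * ((subordPhi x r : ℝ) : ℂ)) * ((r ^ (-(3:ℝ)/2) : ℝ) : ℂ)))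
      (Ioi 0) := by
    intro r hr
    have hr0 : (0:ℝ) < r := hr
    simp only
    rw [abs_of_pos (subord_U'_pos hx hr0), hgdef]
    simp only
    have hc : ((subordU x r : ℝ) : ℂ) ^ 2 + ((Real.sqrt x : ℝ) : ℂ)
        = ((subordPhi x r : ℝ) : ℂ) := by
      rw [← subord_U_sq hx hr0]
      push_cast
      ring
    rw [hc]
    simp only [real_smul, subordU']
    push_cast
    ring
  rw [setIntegral_congr_fun measurableSet_Ioi hcong]
  have hi1 := subord_integrable_aux y hy hx (p := -(1:ℝ)/2) (by norm_num) (by norm_num)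
  have hi3 := subord_integrable_aux y hy hx (p := -(3:ℝ)/2) (by norm_num) (by norm_num)
  have hint1 : Integrable (fun r : ℝ => (Real.sqrt x / 2 : ℝ) •
      (Complex.exp (-y * ((subordPhi x r : ℝ) : ℂ)) * ((r ^ (-(1:ℝ)/2) : ℝ) : ℂ)))
      (volume.restrict (Ioi 0)) := hi1.fun_smul _
  have hint3 : Integrable (fun r : ℝ => ((1:ℝ)/4 : ℝ) •
      (Complex.exp (-y * ((subordPhi x r : ℝ) : ℂ)) * ((r ^ (-(3:ℝ)/2) : ℝ) : ℂ)))
      (volume.restrict (Ioi 0)) := hi3.fun_smul _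
  rw [MeasureTheory.integral_add hint1 hint3, integral_smul, integral_smul,
    real_smul, real_smul]

lemma subord_cpow_key (y : ℂ) (hy : 0 < y.re) :
    y ^ (1/2 : ℂ) * (((π : ℝ) : ℂ) / y) ^ (1/2 : ℂ) = ((Real.sqrt π : ℝ) : ℂ) := by
  have hy0 : y ≠ 0 := by intro h; rw [h] at hy; simp at hy
  have hπ0 : ((π : ℝ) : ℂ) ≠ 0 := Complex.ofReal_ne_zero.mpr (ne_of_gt Real.pi_pos)
  have hd0 : ((π : ℝ) : ℂ) / y ≠ 0 := div_ne_zero hπ0 hy0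
  have hre : 0 < (((π : ℝ) : ℂ) / y).re := by
    rw [div_eq_mul_inv, Complex.re_ofReal_mul, Complex.inv_re]
    exact mul_pos Real.pi_pos (div_pos hy (Complex.normSq_pos.mpr hy0))
  have harg1 : |Complex.arg y| < π / 2 :=
    Complex.abs_arg_lt_pi_div_two_iff.mpr (Or.inl hy)
  have harg2 : |Complex.arg (((π : ℝ) : ℂ) / y)| < π / 2 :=
    Complex.abs_arg_lt_pi_div_two_iff.mpr (Or.inl hre)
  have hmul : y * (((π : ℝ) : ℂ) / y) = ((π : ℝ) : ℂ) := by
    rw [mul_comm, div_mul_cancel₀ _ hy0]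
  have hlog : Complex.log y + Complex.log (((π : ℝ) : ℂ) / y)
      = Complex.log ((π : ℝ) : ℂ) := by
    rw [← Complex.log_mul hy0 hd0 ?_, hmul]
    constructor
    · have := abs_lt.mp harg1
      have := abs_lt.mp harg2
      linarith [Real.pi_pos]
    · have := abs_lt.mp harg1
      have := abs_lt.mp harg2
      linarith [Real.pi_pos]
  rw [Complex.cpow_def_of_ne_zero hy0, Complex.cpow_def_of_ne_zero hd0, ← Complex.exp_add,
    ← add_mul, hlog, ← Complex.cpow_def_of_ne_zero hπ0]
  rw [show ((Real.sqrt π : ℝ) : ℂ) = ((π ^ ((1:ℝ)/2) : ℝ) : ℂ) by rw [Real.sqrt_eq_rpow],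
    Complex.ofReal_cpow Real.pi_pos.le]
  norm_num

/-- **Complex subordination formula.** For every complex `y` with `Re y > 0` and every real
`x > 0`, `e^{-y√x} = (√y/(2√π)) ∫₀^∞ e^{-y(rx + 1/(4r))} r^{-3/2} dr`, where `√y = y^{1/2}` is
the principal branch of the complex square root; the integral is absolutely convergent. -/
theorem subordination_formula_complex (y : ℂ) (hy : 0 < y.re) (x : ℝ) (hx : 0 < x) :
    IntegrableOn
      (fun r : ℝ => Complex.exp (-y * ((r * x : ℝ) + 1 / (4 * r))) *
        ((r ^ (-(3 : ℝ) / 2) : ℝ) : ℂ)) (Set.Ioi 0) volume ∧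
    Complex.exp (-y * (Real.sqrt x : ℂ)) =
      y ^ (1 / 2 : ℂ) / (2 * (Real.sqrt π : ℂ)) *
        ∫ r in Set.Ioi (0 : ℝ),
          Complex.exp (-y * ((r * x : ℝ) + 1 / (4 * r))) * ((r ^ (-(3 : ℝ) / 2) : ℝ) : ℂ) := by
  have hcong : EqOn
      (fun r : ℝ => Complex.exp (-y * ((subordPhi x r : ℝ) : ℂ)) *
        ((r ^ (-(3:ℝ)/2) : ℝ) : ℂ))
      (fun r : ℝ => Complex.exp (-y * ((r * x : ℝ) + 1 / (4 * r))) *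
        ((r ^ (-(3 : ℝ) / 2) : ℝ) : ℂ)) (Ioi 0) := by
    intro r hr
    have hr0 : (r : ℝ) ≠ 0 := ne_of_gt hr
    simp only [subordPhi]
    congr 2
    push_cast
    ring
  have hi3 := subord_integrable_aux y hy hx (p := -(3:ℝ)/2) (by norm_num) (by norm_num)
  constructor
  · exact hi3.congr_fun hcong measurableSet_Ioi
  · rw [← setIntegral_congr_fun measurableSet_Ioi hcong]
    have h1 := subord_step1 y hx
    have h2 := subord_step2 y hy hx
    set A := ∫ r in Ioi (0:ℝ),
      Complex.exp (-y * ((subordPhi x r : ℝ) : ℂ)) * ((r ^ (-(3:ℝ)/2) : ℝ) : ℂ) with hA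
    set B := ∫ r in Ioi (0:ℝ),
      Complex.exp (-y * ((subordPhi x r : ℝ) : ℂ)) * ((r ^ (-(1:ℝ)/2) : ℝ) : ℂ) with hB
    have hπs : ((Real.sqrt π : ℝ) : ℂ) ≠ 0 :=
      Complex.ofReal_ne_zero.mpr (ne_of_gt (Real.sqrt_pos.mpr Real.pi_pos))
    have hkey := subord_cpow_key y hy
    -- from h1 and h2 : exp(-y√x) * (π/y)^(1/2) = (1/2) * A
    have hhalf : Complex.exp (-y * ((Real.sqrt x : ℝ) : ℂ)) * (((π : ℝ) : ℂ) / y) ^ (1/2 : ℂ)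
        = (1/2 : ℂ) * A := by
      rw [h2, h1]
      push_cast
      ring
    have hAval : A = 2 * Complex.exp (-y * ((Real.sqrt x : ℝ) : ℂ)) *
        (((π : ℝ) : ℂ) / y) ^ (1/2 : ℂ) := by
      linear_combination (-2 : ℂ) * hhalf
    rw [hAval]
    rw [div_mul_eq_mul_div, eq_div_iff (by
      intro h
      rw [mul_eq_zero] at h
      rcases h with h | h
      · norm_num at h
      · exact hπs h)]
    calc Complex.exp (-y * ((Real.sqrt x : ℝ) : ℂ)) * (2 * ((Real.sqrt π : ℝ) : ℂ))
        = 2 * Complex.exp (-y * ((Real.sqrt x : ℝ) : ℂ)) *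
            (y ^ (1/2 : ℂ) * (((π : ℝ) : ℂ) / y) ^ (1/2 : ℂ)) := by rw [hkey]; ring
      _ = y ^ (1 / 2 : ℂ) * (2 * Complex.exp (-y * ((Real.sqrt x : ℝ) : ℂ)) *
            (((π : ℝ) : ℂ) / y) ^ (1/2 : ℂ)) := by ring
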